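/- Assume p ≥ 5. Let e ≥ 0 be an integer and q = p^e. Define σ : SL(2,k) → Mat(4,k) by σ([[a,b],[c,d]]) = [[a^{3q}, a^{2q}b^{q}, (1/2)a^{q}b^{2q}, (1/6)b^{3q}], [3a^{2q}c^{q}, a^{q}(ad+2bc)^{q}, b^{q}(ad+(1/2)bc)^{q}, (1/2)b^{2q}d^{q}], [6a^{q}c^{2q}, 4c^{q}(ad+(1/2)bc)^{q}, d^{q}(ad+2bc)^{q}, b^{q}d^{2q}], [6c^{3q}, 6c^{2q}d^{q}, 3c^{q}d^{2q}, d^{3q}]]. Then σ takes values in SL(4,k) and is a group homomorphism, i.e. det σ(A) = 1 and σ(A·B) = σ(A)·σ(B) for all A,B ∈ SL(2,k); moreover the only column vector v ∈ k⁴ with σ(A)·v = v for all A ∈ SL(2,k) is v = 0, and the only row vector w ∈ k⁴ with w·σ(A) = w for all A ∈ SL(2,k) is w = 0. -/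
import Mathlib


open Matrix

/-- The explicit map `σ` of form (I)* on all of `SL(2,k)`. -/
noncomputable def sigmaStarI (k : Type*) [Field k] (q : ℕ)
    (A : SpecialLinearGroup (Fin 2) k) : Matrix (Fin 4) (Fin 4) k :=
  let a := A.1 0 0
  let b := A.1 0 1
  let c := A.1 1 0
  let d := A.1 1 1
  !![a ^ (3 * q), a ^ (2 * q) * b ^ q, (1 / 2 : k) * (a ^ q * b ^ (2 * q)),
       (1 / 6 : k) * b ^ (3 * q);
     3 * (a ^ (2 * q) * c ^ q), a ^ q * (a * d + 2 * (b * c)) ^ q,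
       b ^ q * (a * d + (1 / 2 : k) * (b * c)) ^ q, (1 / 2 : k) * (b ^ (2 * q) * d ^ q);
     6 * (a ^ q * c ^ (2 * q)), 4 * (c ^ q * (a * d + (1 / 2 : k) * (b * c)) ^ q),
       d ^ q * (a * d + 2 * (b * c)) ^ q, b ^ q * d ^ (2 * q);
     6 * c ^ (3 * q), 6 * (c ^ (2 * q) * d ^ q), 3 * (c ^ q * d ^ (2 * q)), d ^ (3 * q)]

set_option maxHeartbeats 1600000 in
private lemma sigma_frob {k : Type*} [Field k] {p : ℕ} [Fact p.Prime] [CharP k p] (e : ℕ)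
    (A : SpecialLinearGroup (Fin 2) k) :
    sigmaStarI k (p ^ e) A = (sigmaStarI k 1 A).map (iterateFrobenius k p e) := by
  have h2 : (2 : k) ^ p ^ e = 2 := by
    rw [← iterateFrobenius_def]; exact map_ofNat _ 2
  ext i j
  fin_cases i <;> fin_cases j <;>
  · simp only [sigmaStarI, Matrix.map_apply]
    norm_num [Matrix.cons_val_zero, Matrix.cons_val_one,
      Matrix.cons_val_two, Matrix.cons_val_three, Matrix.vecHead, Matrix.vecTail]
    try simp only [_root_.map_mul, map_div₀, _root_.map_one, map_ofNat, map_pow, pow_one,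
      mul_one]
    try simp only [iterateFrobenius_def]
    try rw [add_pow_expChar_pow]
    try simp only [mul_pow, inv_pow, h2]
    try ring

set_option maxHeartbeats 1600000 in
private lemma sigma1_mul {k : Type*} [Field k] (h2 : (2:k) ≠ 0) (h3 : (3:k) ≠ 0)
    (A B : SpecialLinearGroup (Fin 2) k) :
    sigmaStarI k 1 (A * B) = sigmaStarI k 1 A * sigmaStarI k 1 B := by
  have h6 : (6:k) ≠ 0 := by
    have : (6:k) = 2 * 3 := by norm_num
    rw [this]; exact mul_ne_zero h2 h3
  ext i j
  fin_cases i <;> fin_cases j <;>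
  · simp only [sigmaStarI, Matrix.SpecialLinearGroup.coe_mul]
    norm_num [Matrix.mul_apply, Fin.sum_univ_four, Fin.sum_univ_two,
      Matrix.cons_val_zero, Matrix.cons_val_one,
      Matrix.cons_val_two, Matrix.cons_val_three, Matrix.vecHead, Matrix.vecTail]
    try field_simp
    try ring

private lemma my_det_fin_four {R : Type*} [CommRing R] (M : Matrix (Fin 4) (Fin 4) R) :
    M.det = M 0 0*M 1 1*M 2 2*M 3 3 - M 0 0*M 1 1*M 2 3*M 3 2 - M 0 0*M 1 2*M 2 1*M 3 3 + M 0 0*M 1 2*M 2 3*M 3 1 + M 0 0*M 1 3*M 2 1*M 3 2 - M 0 0*M 1 3*M 2 2*M 3 1 - M 0 1*M 1 0*M 2 2*M 3 3 + M 0 1*M 1 0*M 2 3*M 3 2 + M 0 1*M 1 2*M 2 0*M 3 3 - M 0 1*M 1 2*M 2 3*M 3 0 - M 0 1*M 1 3*M 2 0*M 3 2 + M 0 1*M 1 3*M 2 2*M 3 0 + M 0 2*M 1 0*M 2 1*M 3 3 - M 0 2*M 1 0*M 2 3*M 3 1 - M 0 2*M 1 1*M 2 0*M 3 3 + M 0 2*M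 1 1*M 2 3*M 3 0 + M 0 2*M 1 3*M 2 0*M 3 1 - M 0 2*M 1 3*M 2 1*M 3 0 - M 0 3*M 1 0*M 2 1*M 3 2 + M 0 3*M 1 0*M 2 2*M 3 1 + M 0 3*M 1 1*M 2 0*M 3 2 - M 0 3*M 1 1*M 2 2*M 3 0 - M 0 3*M 1 2*M 2 0*M 3 1 + M 0 3*M 1 2*M 2 1*M 3 0 := by
  rw [Matrix.det_succ_row_zero, Fin.sum_univ_four]
  norm_num [Matrix.det_fin_three, Matrix.submatrix_apply, Fin.succAbove, Fin.lt_def,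
    show (Fin.succ 0 : Fin 4) = 1 from rfl, show (Fin.succ 1 : Fin 4) = 2 from rfl,
    show (Fin.succ 2 : Fin 4) = 3 from rfl,
    show (Fin.castSucc 0 : Fin 4) = 0 from rfl, show (Fin.castSucc 1 : Fin 4) = 1 from rfl,
    show (Fin.castSucc 2 : Fin 4) = 2 from rfl,
    show ((0 : Fin 4) : ℕ) = 0 from rfl, show ((1 : Fin 4) : ℕ) = 1 from rfl,
    show ((2 : Fin 4) : ℕ) = 2 from rfl, show ((3 : Fin 4) : ℕ) = 3 from rfl]
  ring

set_option maxHeartbeats 1600000 in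
private lemma sigma1_det {k : Type*} [Field k] (h2 : (2:k) ≠ 0) (h3 : (3:k) ≠ 0)
    (A : SpecialLinearGroup (Fin 2) k) :
    (sigmaStarI k 1 A).det = 1 := by
  have h6 : (6:k) ≠ 0 := by
    have : (6:k) = 2 * 3 := by norm_num
    rw [this]; exact mul_ne_zero h2 h3
  have hbig : ∀ m n : ℕ, ((2:k) ^ m * 3 ^ n) ≠ 0 :=
    fun m n => mul_ne_zero (pow_ne_zero m h2) (pow_ne_zero n h3)
  have h32 : (32:k) ≠ 0 := by have := hbig 5 0; norm_num at this ⊢; exact this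
  have h64 : (64:k) ≠ 0 := by have := hbig 6 0; norm_num at this ⊢; exact this
  have h768 : (768:k) ≠ 0 := by have := hbig 8 1; norm_num at this ⊢; exact this
  have hA : A.1 0 0 * A.1 1 1 - A.1 0 1 * A.1 1 0 = 1 := by
    have := A.2; rwa [Matrix.det_fin_two] at this
  have key : (sigmaStarI k 1 A).det
      = (A.1 0 0 * A.1 1 1 - A.1 0 1 * A.1 1 0) ^ 6 := by
    rw [my_det_fin_four]
    simp only [sigmaStarI, Matrix.cons_val_zero, Matrix.cons_val_one,
      Matrix.cons_val_two, Matrix.cons_val_three, Matrix.vecHead, Matrix.vecTail,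
      Matrix.of_apply, Matrix.cons_val', Matrix.empty_val', Matrix.cons_val_fin_one,
      Function.comp_apply, Matrix.cons_val_succ, Fin.succ_zero_eq_one, Fin.succ_one_eq_two,
      pow_one, mul_one]
    have hx : (2:k) * (1/2 : k) = 1 := by rw [mul_one_div]; exact div_self h2
    have hy : (6:k) * (1/6 : k) = 1 := by rw [mul_one_div]; exact div_self h6
    set a := A.1 0 0
    set b := A.1 0 1
    set c := A.1 1 0
    set d := A.1 1 1
    set x := (1/2 : k)
    set y := (1/6 : k)
    linear_combination (((6 : k)*b^6*c^6*y) + ((12 : k)*b^6*c^6*x*y) + ((-3 : k)*a*b^5*c^5*d) + ((6 : k)*a*b^5*c^5*d*y) + ((-6 : k)*a*b^5*c^5*d*x) + ((-12 : k)*a*b^5*c^5*d*x^2) + ((12 : k)*a^2*b^4*c^4*d^2) + ((-18 : k)*a^2*b^4*c^4*d^2*y) + ((6 : k)*a^2*b^4*c^4*d^2*x) + ((-13 : k)*a^3*b^3*c^3*d^3) + ((10 : k)*a^3*b^3*c^3*d^3*x) + ((2 : k)*a^4*b^2*c^2*d^4)) * hx + ((b^6*c^6) + ((-3 : k)*a*b^5*c^5*d)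 + ((3 : k)*a^2*b^4*c^4*d^2) + ((-1 : k)*a^3*b^3*c^3*d^3)) * hy
  rw [key, hA, one_pow]

/-- For `p ≥ 5` the explicit map `σ` of form (I)* takes values in
`SL(4,k)`, is a group homomorphism, and has no nonzero fixed column vectors and no nonzero
fixed row vectors. -/
theorem stmt10 {k : Type*} [Field k] [IsAlgClosed k] {p : ℕ} [Fact p.Prime] [CharP k p]
    (hp : 5 ≤ p) (e : ℕ) :
    (∀ A : SpecialLinearGroup (Fin 2) k, (sigmaStarI k (p ^ e) A).det = 1) ∧
      (∀ A B : SpecialLinearGroup (Fin 2) k,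
        sigmaStarI k (p ^ e) (A * B) = sigmaStarI k (p ^ e) A * sigmaStarI k (p ^ e) B) ∧
      (∀ v : Fin 4 → k,
        (∀ A : SpecialLinearGroup (Fin 2) k, sigmaStarI k (p ^ e) A *ᵥ v = v) → v = 0) ∧
      ∀ w : Fin 4 → k,
        (∀ A : SpecialLinearGroup (Fin 2) k, w ᵥ* sigmaStarI k (p ^ e) A = w) → w = 0 := by
  have hne : ∀ n : ℕ, 0 < n → n < p → ((n : ℕ) : k) ≠ 0 := fun n h0 hlt h =>
    (Nat.not_dvd_of_pos_of_lt h0 hlt) ((CharP.cast_eq_zero_iff k p n).mp h)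
  have h2 : (2:k) ≠ 0 := by have := hne 2 (by norm_num) (by omega); exact_mod_cast this
  have h3 : (3:k) ≠ 0 := by have := hne 3 (by norm_num) (by omega); exact_mod_cast this
  have h6 : (6:k) ≠ 0 := by
    have : (6:k) = 2 * 3 := by norm_num
    rw [this]; exact mul_ne_zero h2 h3
  have hq0 : p ^ e ≠ 0 := pow_ne_zero e (by omega)
  have hq2 : 2 * p ^ e ≠ 0 := mul_ne_zero (by norm_num) hq0
  have hq2' : p ^ e * 2 ≠ 0 := mul_ne_zero hq0 (by norm_num)
  have hq3 : 3 * p ^ e ≠ 0 := mul_ne_zero (by norm_num) hq0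
  have hq3' : p ^ e * 3 ≠ 0 := mul_ne_zero hq0 (by norm_num)
  have hudet : Matrix.det !![(1:k),1;0,1] = 1 := by norm_num
  have hldet : Matrix.det !![(1:k),0;1,1] = 1 := by norm_num
  refine ⟨?_, ?_, ?_, ?_⟩
  · intro A
    rw [sigma_frob, ← RingHom.mapMatrix_apply, ← RingHom.map_det, sigma1_det h2 h3, _root_.map_one]
  · intro A B
    rw [sigma_frob, sigma_frob, sigma_frob, sigma1_mul h2 h3, Matrix.map_mul]
  · intro v hv
    have eu0 := congr_fun (hv ⟨!![(1:k),1;0,1], hudet⟩) 0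
    have eu1 := congr_fun (hv ⟨!![(1:k),1;0,1], hudet⟩) 1
    have eu2 := congr_fun (hv ⟨!![(1:k),1;0,1], hudet⟩) 2
    have el3 := congr_fun (hv ⟨!![(1:k),0;1,1], hldet⟩) 3
    simp only [sigmaStarI, Matrix.SpecialLinearGroup.coe_mk, Matrix.mulVec,
      dotProduct, Fin.sum_univ_four] at eu0 eu1 eu2 el3
    norm_num [zero_pow hq0, zero_pow hq2, zero_pow hq2', zero_pow hq3, zero_pow hq3', Matrix.cons_val_zero, Matrix.cons_val_one,
      Matrix.cons_val_two, Matrix.cons_val_three, Matrix.vecHead, Matrix.vecTail]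
      at eu0 eu1 eu2 el3
    have e3 : v 3 = 0 := by linear_combination eu2
    have e2 : v 2 = 0 := by linear_combination eu1 - (1/2 : k) * e3
    have e1 : v 1 = 0 := by linear_combination eu0 - (1/2 : k) * e2 - (1/6 : k) * e3
    have e0 : v 0 = 0 := by
      have h60 : (6:k) * v 0 = 0 := by linear_combination el3 - 6 * e1 - 3 * e2
      exact (mul_eq_zero.mp h60).resolve_left h6
    funext i
    fin_cases i <;> simpa using ‹_›
  · intro w hw
    have eu3 := congr_fun (hw ⟨!![(1:k),1;0,1], hudet⟩) 3
    have el0 := congr_fun (hw ⟨!![(1:k),0;1,1], hldet⟩) 0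
    have el1 := congr_fun (hw ⟨!![(1:k),0;1,1], hldet⟩) 1
    have el2 := congr_fun (hw ⟨!![(1:k),0;1,1], hldet⟩) 2
    simp only [sigmaStarI, Matrix.SpecialLinearGroup.coe_mk, Matrix.vecMul,
      dotProduct, Fin.sum_univ_four] at eu3 el0 el1 el2
    norm_num [zero_pow hq0, zero_pow hq2, zero_pow hq2', zero_pow hq3, zero_pow hq3', Matrix.cons_val_zero, Matrix.cons_val_one,
      Matrix.cons_val_two, Matrix.cons_val_three, Matrix.vecHead, Matrix.vecTail]
      at eu3 el0 el1 el2
    have h4 : (4:k) ≠ 0 := by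
      have : (4:k) = 2 * 2 := by norm_num
      rw [this]; exact mul_ne_zero h2 h2
    have e3 : w 3 = 0 := el2.resolve_right h3
    have e2 : w 2 = 0 := by
      have h40 : (4:k) * w 2 = 0 := by linear_combination el1 - 6 * e3
      exact (mul_eq_zero.mp h40).resolve_left h4
    have e1 : w 1 = 0 := by
      have h31 : (3:k) * w 1 = 0 := by linear_combination el0 - 6 * e2 - 6 * e3
      exact (mul_eq_zero.mp h31).resolve_left h3
    have e0 : w 0 = 0 := by
      have h60 : (6:k)⁻¹ * w 0 = 0 := by
        linear_combination eu3 - (2:k)⁻¹ * e1 - e2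
      exact (mul_eq_zero.mp h60).resolve_left (inv_ne_zero h6)
    funext i
    fin_cases i <;> simpa using ‹_›
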